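/- arXiv:2007.09434 — 2 statements merged into one kernel-verified Lean document; each statement's English description precedes it below -/
import Mathlib

section
/- Let H ⊂ G be closed, Y a Hamiltonian H-space with momentum map Ψ, and let Φ_{N//H} be the momentum map of the induced space Ind_H^G Y. A coadjoint orbit 𝒪 ⊂ 𝔤* intersects the image of Φ_{N//H} if and only if its restriction 𝒪|_𝔥 = {m|_𝔥 : m ∈ 𝒪} intersects the image of Ψ. -/
open Manifold Topology

noncomputable section

variable {E : Type*} [NormedAddCommGroup E] [NormedSpace ℝ E]
variable {F : Type*} [NormedAddCommGroup F] [NormedSpace ℝ F]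
variable {G : Type*} [TopologicalSpace G] [ChartedSpace E G] [Group G] [LieGroup 𝓘(ℝ, E) (⊤ : ℕ∞) G]
variable {H : Type*} [TopologicalSpace H] [ChartedSpace F H] [Group H] [LieGroup 𝓘(ℝ, F) (⊤ : ℕ∞) H]

/-- The adjoint representation of `G` on `𝔤 = E`, as the derivative of conjugation
at the identity. -/
def Ad (g : G) : E →L[ℝ] E :=
  mfderiv 𝓘(ℝ, E) 𝓘(ℝ, E) (fun x => g * x * g⁻¹) (1 : G)

/-- The coadjoint action of `G` on `𝔤* = E →L[ℝ] ℝ`. -/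
def coad (g : G) (m : E →L[ℝ] ℝ) : E →L[ℝ] ℝ := m.comp (Ad g⁻¹)

/-- The derivative at the identity of the inclusion `ι : H → G`, i.e. the
inclusion `𝔥 → 𝔤` of Lie algebras. -/
def dIota (ι : H →* G) : F →L[ℝ] E :=
  mfderiv 𝓘(ℝ, F) 𝓘(ℝ, E) (ι : H → G) (1 : H)

variable {Y : Type*} [MulAction H Y]

/-- The momentum map `φ(p, y) = p q⁻¹` for the `G`-action on `N = T*G × Y`, in the
left trivialization `T*G ≅ G × 𝔤*` (where `p ∈ T*_q G` corresponds to
`(q, μ)`, `μ = q⁻¹ p`): `φ(q, μ, y) = μ ∘ Ad(q⁻¹)`. -/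
def phiMap (n : G × (E →L[ℝ] ℝ) × Y) : E →L[ℝ] ℝ := coad n.1 n.2.1

/-- The momentum map `ψ(p, y) = Ψ(y) − (q⁻¹ p)|_𝔥` for the `H`-action on
`N = T*G × Y`, in the left trivialization: `ψ(q, μ, y) = Ψ(y) − μ ∘ dι`. -/
def psiMap (ι : H →* G) (Ψ : Y → F →L[ℝ] ℝ) (n : G × (E →L[ℝ] ℝ) × Y) : F →L[ℝ] ℝ :=
  Ψ n.2.2 - (n.2.1.comp (dIota ι))

/-- The `G`-action `g(p, y) = (g p, y)` on `N = T*G × Y` (left translation does not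
change the left trivialization `μ`). -/
def actG (g : G) (n : G × (E →L[ℝ] ℝ) × Y) : G × (E →L[ℝ] ℝ) × Y :=
  (g * n.1, n.2.1, n.2.2)

/-- The `H`-action `h(p, y) = (p h⁻¹, h(y))` on `N = T*G × Y` in the left
trivialization. -/
def actH (ι : H →* G) (h : H) (n : G × (E →L[ℝ] ℝ) × Y) : G × (E →L[ℝ] ℝ) × Y :=
  (n.1 * (ι h)⁻¹, n.2.1.comp (Ad ((ι h)⁻¹)), h • n.2.2)

section Aux

set_option linter.unusedSectionVars false

lemma mfderiv_congr_pt (f : G → G) {q q' : G} (h : q = q') :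
    mfderiv 𝓘(ℝ, E) 𝓘(ℝ, E) f q = mfderiv 𝓘(ℝ, E) 𝓘(ℝ, E) f q' := by subst h; rfl

lemma Ad_one : Ad (1 : G) = ContinuousLinearMap.id ℝ E := by
  have h : (fun x : G => (1:G) * x * (1:G)⁻¹) = id := by funext x; simp
  rw [Ad, h, mfderiv_id]; rfl

lemma conj_smooth (g : G) : ContMDiff 𝓘(ℝ, E) 𝓘(ℝ, E) (⊤ : ℕ∞) (fun x : G => g * x * g⁻¹) :=
  (contMDiff_const.mul contMDiff_id).mul contMDiff_const

lemma Ad_mul (g h : G) : Ad (g * h) = (Ad g).comp (Ad h : E →L[ℝ] E) := by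
  have h1 : (fun x : G => (g*h) * x * (g*h)⁻¹)
      = (fun x : G => g*x*g⁻¹) ∘ (fun x : G => h*x*h⁻¹) := by
    funext x; simp [mul_assoc, mul_inv_rev]
  have hg : MDifferentiableAt 𝓘(ℝ, E) 𝓘(ℝ, E) (fun x : G => g*x*g⁻¹)
      ((fun x : G => h*x*h⁻¹) 1) := (conj_smooth g).mdifferentiableAt (by simp)
  have hh : MDifferentiableAt 𝓘(ℝ, E) 𝓘(ℝ, E) (fun x : G => h*x*h⁻¹) 1 :=
    (conj_smooth h).mdifferentiableAt (by simp)
  have hc := mfderiv_comp (1 : G) hg hh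
  have h3 : mfderiv 𝓘(ℝ, E) 𝓘(ℝ, E) (fun x : G => g*x*g⁻¹) (h * 1 * h⁻¹)
      = mfderiv 𝓘(ℝ, E) 𝓘(ℝ, E) (fun x : G => g*x*g⁻¹) 1 :=
    mfderiv_congr_pt _ (by simp)
  rw [Ad, h1, hc, h3]; rfl

lemma coad_one (m : E →L[ℝ] ℝ) : coad (1 : G) m = m := by
  rw [coad, inv_one, Ad_one]; rfl

lemma coad_coad (g h : G) (m : E →L[ℝ] ℝ) : coad g (coad h m) = coad (g * h) m := by
  simp only [coad, mul_inv_rev, Ad_mul, ContinuousLinearMap.comp_assoc]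

end Aux

/-- Let `Φ_{N//H}` be the momentum map of the induced space
`Ind_H^G Y = ψ⁻¹(0)/H`, so that `Im(Φ_{N//H}) = φ(ψ⁻¹(0))`.  A coadjoint orbit
`𝒪 = G·m` of `G` intersects `Im(Φ_{N//H})` if and only if its restriction
`𝒪|_𝔥 = {m'|_𝔥 : m' ∈ 𝒪}` intersects `Im(Ψ)`. -/
theorem orbit_meets_induced_image_iff
    (ι : H →* G) (hι : ContMDiff 𝓘(ℝ, F) 𝓘(ℝ, E) (⊤ : ℕ∞) (ι : H → G))
    (Ψ : Y → F →L[ℝ] ℝ)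
    (hΨ : ∀ (h : H) (y : Y), Ψ (h • y) = coad h (Ψ y))
    (m : E →L[ℝ] ℝ) :
    ((Set.range fun g : G => coad g m) ∩
        (phiMap '' {n : G × (E →L[ℝ] ℝ) × Y | psiMap ι Ψ n = 0})).Nonempty ↔
    (((fun m' : E →L[ℝ] ℝ => m'.comp (dIota ι)) '' (Set.range fun g : G => coad g m)) ∩
        Set.range Ψ).Nonempty := by
  constructor
  · rintro ⟨x, ⟨g, rfl⟩, ⟨⟨q, μ, y⟩, hn, hx⟩⟩
    have hμ : μ = coad (q⁻¹ * g) m := by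
      have : coad q⁻¹ (phiMap (q, μ, y)) = coad q⁻¹ (coad g m) := by rw [hx]
      rw [phiMap, coad_coad, inv_mul_cancel, coad_one, coad_coad] at this
      exact this
    have hψ : Ψ y = μ.comp (dIota ι) := by
      have := hn
      simp only [Set.mem_setOf_eq, psiMap, sub_eq_zero] at this
      exact this
    exact ⟨Ψ y, ⟨coad (q⁻¹ * g) m, ⟨q⁻¹ * g, rfl⟩, by rw [hψ, hμ]⟩, ⟨y, rfl⟩⟩
  · rintro ⟨x, ⟨m', ⟨g, rfl⟩, rfl⟩, ⟨y, hy⟩⟩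
    refine ⟨coad g m, ⟨g, rfl⟩, ⟨(1, coad g m, y), ?_, ?_⟩⟩
    · simp only [Set.mem_setOf_eq, psiMap, sub_eq_zero]
      simpa using hy
    · rw [phiMap, coad_one]
end
end

section
/- If the induced Hamiltonian G-space Ind_H^G Y is homogeneous under G (G acts transitively), then Y is homogeneous under H. -/
open Manifold Topology

noncomputable section

variable {E : Type*} [NormedAddCommGroup E] [NormedSpace ℝ E]
variable {F : Type*} [NormedAddCommGroup F] [NormedSpace ℝ F]
variable {G : Type*} [TopologicalSpace G] [ChartedSpace E G] [Group G] [LieGroup 𝓘(ℝ, E) (⊤ : ℕ∞) G]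
variable {H : Type*} [TopologicalSpace H] [ChartedSpace F H] [Group H] [LieGroup 𝓘(ℝ, F) (⊤ : ℕ∞) H]

variable {Y : Type*} [MulAction H Y]

/-- If the induced Hamiltonian `G`-space `Ind_H^G Y = ψ⁻¹(0)/H`
is homogeneous under `G` — i.e. the descended `G`-action is transitive, which
means that any two points of the zero level `ψ⁻¹(0)` are related by the
`G × H`-action — then `Y` is homogeneous under `H`. -/
theorem homogeneous_of_induced_homogeneous
    [FiniteDimensional ℝ E] [FiniteDimensional ℝ F]
    (ι : H →* G) (hι : ContMDiff 𝓘(ℝ, F) 𝓘(ℝ, E) (⊤ : ℕ∞) (ι : H → G))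
    (hinj : Function.Injective (dIota (E := E) (F := F) ι))
    (Ψ : Y → F →L[ℝ] ℝ)
    (hΨ : ∀ (h : H) (y : Y), Ψ (h • y) = coad h (Ψ y))
    (htrans : ∀ n n' : G × (E →L[ℝ] ℝ) × Y,
      psiMap ι Ψ n = 0 → psiMap ι Ψ n' = 0 →
        ∃ (g : G) (h : H), n' = actH ι h (actG g n)) :
    ∀ y₁ y₂ : Y, ∃ h : H, y₂ = h • y₁ := by
  -- For any y, there exists μ : 𝔤* extending Ψ y along dι.
  have hext : ∀ y : Y, ∃ m : E →L[ℝ] ℝ, (Ψ y) = m.comp (dIota ι) := by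
    intro y
    obtain ⟨g, hg⟩ := (dIota (E := E) (F := F) ι).toLinearMap.exists_leftInverse_of_injective
      (LinearMap.ker_eq_bot.mpr hinj)
    refine ⟨LinearMap.toContinuousLinearMap ((Ψ y).toLinearMap.comp g), ?_⟩
    ext x
    have hx : g ((dIota ι) x) = x := LinearMap.congr_fun hg x
    simp [hx]
  intro y₁ y₂
  obtain ⟨m₁, hm₁⟩ := hext y₁
  obtain ⟨m₂, hm₂⟩ := hext y₂
  have h₁ : psiMap ι Ψ ((1 : G), m₁, y₁) = 0 := by
    simp [psiMap, sub_eq_zero, hm₁]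
  have h₂ : psiMap ι Ψ ((1 : G), m₂, y₂) = 0 := by
    simp [psiMap, sub_eq_zero, hm₂]
  obtain ⟨g, h, heq⟩ := htrans _ _ h₁ h₂
  exact ⟨h, congrArg (fun n => n.2.2) heq⟩
end
end
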